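/- If a DFA with two input letters a, b in which b acts as a permutation of the state set Q is completely reachable, then b acts as a cyclic permutation of Q (i.e., the cyclic group generated by b acts transitively on Q). -/

import Mathlib

theorem cyclic_of_completely_reachable {Q : Type*} [Fintype Q] (a b : Q → Q)
    (hb : Function.Bijective b)
    (hcr : ∀ S : Set Q, S.Nonempty → ∃ w : List Bool,
      Set.range (fun q => w.foldl (fun q' c => if c then b q' else a q') q) = S) :
    ∀ p q : Q, ∃ k : ℕ, b^[k] p = q := by
  classical
  by_cases hQ : ∀ p q : Q, p = q
  · exact fun p q => ⟨0, hQ p q⟩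
  push_neg at hQ
  obtain ⟨p0, q0, hpq⟩ := hQ
  -- all words act surjectively when `a` is surjective
  by_cases ha : Function.Surjective a
  · exfalso
    obtain ⟨w, hw⟩ := hcr {p0} ⟨p0, rfl⟩
    have hsurj : ∀ w : List Bool, Function.Surjective
        (fun q => w.foldl (fun q' c => if c then b q' else a q') q) := by
      intro w
      induction w using List.reverseRecOn with
      | nil => exact Function.surjective_id
      | append_singleton w c ih =>
        simp only [List.foldl_append, List.foldl_cons, List.foldl_nil]
        intro y
        cases c with
        | true =>
          obtain ⟨z, hz⟩ := hb.2 y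
          obtain ⟨x, hx⟩ := ih z
          exact ⟨x, by simp [hx, hz]⟩
        | false =>
          obtain ⟨z, hz⟩ := ha y
          obtain ⟨x, hx⟩ := ih z
          exact ⟨x, by simp [hx, hz]⟩
    have huniv : Set.range (fun q => w.foldl (fun q' c => if c then b q' else a q') q)
        = Set.univ := Set.range_eq_univ.mpr (hsurj w)
    rw [hw] at huniv
    have h0 : q0 ∈ ({p0} : Set Q) := huniv ▸ Set.mem_univ q0
    exact hpq h0.symm
  -- a is not surjective: pick an excluded state e
  obtain ⟨e, he⟩ := not_forall.mp ha
  have he' : e ∉ Set.range a := by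
    rintro ⟨x, hx⟩; exact he ⟨x, hx⟩
  -- key lemma: if a word reaches the complement of a singleton {q},
  -- then q is in the forward b-orbit of e
  have key : ∀ w : List Bool, ∀ q : Q,
      Set.range (fun p => w.foldl (fun q' c => if c then b q' else a q') p) = ({q} : Set Q)ᶜ →
      ∃ k : ℕ, b^[k] e = q := by
    intro w
    induction w using List.reverseRecOn with
    | nil =>
      intro q h
      simp only [List.foldl_nil, Set.range_id'] at h
      have : q ∈ ({q} : Set Q)ᶜ := h ▸ Set.mem_univ q
      exact absurd rfl this
    | append_singleton w c ih =>
      intro q h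
      have hcomp : (fun p => (w ++ [c]).foldl (fun q' c => if c then b q' else a q') p)
          = (fun x => if c then b x else a x) ∘
            (fun p => w.foldl (fun q' c => if c then b q' else a q') p) := by
        funext p; simp [List.foldl_append]
      rw [hcomp, Set.range_comp] at h
      set R := Set.range (fun p => w.foldl (fun q' c => if c then b q' else a q') p) with hR
      cases c with
      | false =>
        -- image under a; it avoids e, so q = e
        have h' : a '' R = ({q} : Set Q)ᶜ := by simpa using h
        by_cases hqe : q = e
        · exact ⟨0, hqe.symm⟩
        · exfalso
          have : e ∈ a '' R := by
            rw [h']; simpa using Ne.symm hqe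
          obtain ⟨x, _, hx⟩ := this
          exact he' ⟨x, hx⟩
      | true =>
        have h' : b '' R = ({q} : Set Q)ᶜ := by simpa using h
        -- b '' R = {q}ᶜ, so Rᶜ = {x} with b x = q
        have himg : b '' Rᶜ = ({q} : Set Q) := by
          rw [Set.image_compl_eq hb, h', compl_compl]
        have hq : q ∈ b '' Rᶜ := by rw [himg]; exact rfl
        obtain ⟨x, hxR, hbx⟩ := hq
        have hRx : R = ({x} : Set Q)ᶜ := by
          ext y
          constructor
          · intro hy hyx
            exact hxR (by simpa [Set.mem_singleton_iff.mp hyx] using hy)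
          · intro hy
            by_contra hyR
            have : b y ∈ ({q} : Set Q) := himg ▸ ⟨y, hyR, rfl⟩
            have : y = x := hb.1 (by rw [hbx]; exact this)
            exact hy this
        obtain ⟨k, hk⟩ := ih x hRx
        exact ⟨k + 1, by rw [Function.iterate_succ_apply', hk, hbx]⟩
  -- every state is in the forward b-orbit of e
  have horbit : ∀ s : Q, ∃ k : ℕ, b^[k] e = s := by
    intro s
    have hne : (({s} : Set Q)ᶜ).Nonempty := by
      rcases eq_or_ne p0 s with h | h
      · exact ⟨q0, by simp [← h, Ne.symm hpq]⟩
      · exact ⟨p0, by simp [h]⟩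
    obtain ⟨w, hw⟩ := hcr _ hne
    exact key w s hw
  -- b has finite order m ≥ 1
  set σ : Equiv.Perm Q := Equiv.ofBijective b hb with hσ
  have hiter : ∀ k : ℕ, ∀ x : Q, (σ ^ k) x = b^[k] x := by
    intro k
    induction k with
    | zero => simp
    | succ n ihn =>
      intro x
      rw [pow_succ, Function.iterate_succ_apply]
      exact ihn (b x)
  set m := orderOf σ with hm
  have hmpos : 0 < m := orderOf_pos σ
  have hbm : ∀ x : Q, b^[m] x = x := by
    intro x
    rw [← hiter m x, pow_orderOf_eq_one σ]
    rfl
  have hidm : ∀ n : ℕ, b^[n * m] e = e := by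
    intro n
    rw [Nat.mul_comm, Function.iterate_mul]
    induction n with
    | zero => rfl
    | succ t iht => rw [Function.iterate_succ_apply', iht, hbm]
  intro p q
  obtain ⟨k1, hk1⟩ := horbit p
  obtain ⟨k2, hk2⟩ := horbit q
  refine ⟨k2 + k1 * (m - 1), ?_⟩
  rw [← hk1, ← Function.iterate_add_apply]
  have harith : k2 + k1 * (m - 1) + k1 = k2 + k1 * m := by
    have h1 : k1 * (m - 1) + k1 = k1 * m := by
      calc k1 * (m - 1) + k1 = k1 * (m - 1 + 1) := by ring
        _ = k1 * m := by rw [Nat.sub_add_cancel hmpos]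
    omega
  rw [harith, Function.iterate_add_apply, hidm k1]
  exact hk2
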